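/- Let K be a compact Hausdorff space. Every weak multiplication on C(K) is a weak multiplier. -/

import Mathlib

open Filter Topology

/-- A bounded linear operator `T` on `C(K, ℝ)` is a *weak multiplier* if for every bounded
pairwise disjoint sequence `(e_n)` in `C(K, ℝ)` and every sequence `(x_n)` in `K` with
`e_n (x_n) = 0` for all `n`, one has `T (e_n) (x_n) → 0`. -/
def IsWeakMultiplier {K : Type*} [TopologicalSpace K] [CompactSpace K]
    (T : C(K, ℝ) →L[ℝ] C(K, ℝ)) : Prop :=
  ∀ (e : ℕ → C(K, ℝ)) (x : ℕ → K),
    (∃ M : ℝ, ∀ n, ‖e n‖ ≤ M) →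
    (∀ i j, i ≠ j → e i * e j = 0) →
    (∀ n, (e n) (x n) = 0) →
    Filter.Tendsto (fun n => (T (e n)) (x n)) Filter.atTop (nhds 0)

/-- An operator on `C(K, ℝ)` is *weakly compact* if the image of the closed unit ball has
compact closure in the weak topology. -/
def IsWeaklyCompactOp {K : Type*} [TopologicalSpace K] [CompactSpace K]
    (S : C(K, ℝ) →L[ℝ] C(K, ℝ)) : Prop :=
  IsCompact (closure ((toWeakSpace ℝ C(K, ℝ)) '' (S '' Metric.closedBall 0 1)))

/-- An operator on `C(K, ℝ)` is a *weak multiplication* if it has the form `g•I + S` with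
`g ∈ C(K, ℝ)` and `S` weakly compact. -/
def IsWeakMultiplication {K : Type*} [TopologicalSpace K] [CompactSpace K]
    (T : C(K, ℝ) →L[ℝ] C(K, ℝ)) : Prop :=
  ∃ (g : C(K, ℝ)) (S : C(K, ℝ) →L[ℝ] C(K, ℝ)),
    IsWeaklyCompactOp S ∧ T = ContinuousLinearMap.mul ℝ C(K, ℝ) g + S

/-- A subset `A` of a real vector space is *lineable* if `A ∪ {0}` contains an
infinite-dimensional subspace. -/
def Lineable {X : Type*} [AddCommGroup X] [Module ℝ X] (A : Set X) : Prop :=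
  ∃ W : Submodule ℝ X, ¬ FiniteDimensional ℝ W ∧ (W : Set X) ⊆ A ∪ {0}

/-- A subset `A` of a real normed space is *spaceable* if `A ∪ {0}` contains a closed
infinite-dimensional subspace. -/
def Spaceable {X : Type*} [NormedAddCommGroup X] [NormedSpace ℝ X] (A : Set X) : Prop :=
  ∃ W : Submodule ℝ X, IsClosed (W : Set X) ∧ ¬ FiniteDimensional ℝ W ∧ (W : Set X) ⊆ A ∪ {0}

section Aux

variable {K : Type*} [TopologicalSpace K] [CompactSpace K]

/-- The evaluation functional at a point, as a continuous linear map. -/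
noncomputable def evalCLM' (x : K) : C(K, ℝ) →L[ℝ] ℝ :=
  LinearMap.mkContinuous
    { toFun := fun f => f x
      map_add' := fun f g => rfl
      map_smul' := fun c f => rfl } 1
    (fun f => by simpa using f.norm_coe_le_norm x)

lemma abs_le_abs_add_abs_sub' (a b : ℝ) : |a| ≤ |b| + |a - b| := by
  have h : a = b + (a - b) := by ring
  calc |a| = |b + (a - b)| := by rw [← h]
    _ ≤ |b| + |a - b| := abs_add_le _ _

/-- Norm bound for signed sums of pairwise disjoint functions. -/
lemma disjoint_sum_norm_le (f : ℕ → C(K, ℝ)) (M : ℝ) (hM0 : 0 ≤ M)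
    (hM : ∀ n, ‖f n‖ ≤ M) (hdisj : ∀ i j, i ≠ j → f i * f j = 0)
    (σ : ℕ → ℝ) (hσ : ∀ n, |σ n| ≤ 1) (F : Finset ℕ) :
    ‖∑ k ∈ F, σ k • f k‖ ≤ M := by
  rw [ContinuousMap.norm_le _ hM0]
  intro y
  rw [ContinuousMap.sum_apply]
  by_cases h : ∃ k0 ∈ F, f k0 y ≠ 0
  · obtain ⟨k0, hk0F, hk0⟩ := h
    have hz : ∀ k ∈ F, k ≠ k0 → (σ k • f k) y = 0 := by
      intro k hk hkne
      have := congrArg (fun u : C(K, ℝ) => u y) (hdisj k k0 hkne)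
      simp only [ContinuousMap.mul_apply, ContinuousMap.zero_apply] at this
      have hky : f k y = 0 := by
        rcases mul_eq_zero.1 this with h' | h'
        · exact h'
        · exact absurd h' hk0
      simp [hky]
    rw [Finset.sum_eq_single_of_mem k0 hk0F hz]
    have heq : ‖(σ k0 • f k0) y‖ = |σ k0| * ‖f k0 y‖ := by
      simp [norm_smul]
    rw [heq]
    calc |σ k0| * ‖f k0 y‖ ≤ 1 * ‖f k0 y‖ :=
          mul_le_mul_of_nonneg_right (hσ k0) (norm_nonneg _)
      _ = ‖f k0 y‖ := one_mul _
      _ ≤ ‖f k0‖ := (f k0).norm_coe_le_norm y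
      _ ≤ M := hM k0
  · push_neg at h
    have hz : ∀ k ∈ F, (σ k • f k) y = 0 := by
      intro k hk; simp [h k hk]
    rw [Finset.sum_eq_zero hz]
    simpa using hM0

/-- Pointwise absolute summability bound for images of a disjoint family. -/
lemma abs_sum_le (S : C(K, ℝ) →L[ℝ] C(K, ℝ)) (f : ℕ → C(K, ℝ)) (M : ℝ) (hM0 : 0 ≤ M)
    (hM : ∀ n, ‖f n‖ ≤ M) (hdisj : ∀ i j, i ≠ j → f i * f j = 0)
    (x : K) (F : Finset ℕ) :
    ∑ k ∈ F, |(S (f k)) x| ≤ ‖S‖ * M := by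
  classical
  set σ : ℕ → ℝ := fun k => if 0 ≤ (S (f k)) x then 1 else -1 with hσdef
  have hσ : ∀ k, |σ k| ≤ 1 := by
    intro k; by_cases h : 0 ≤ (S (f k)) x <;> simp [hσdef, h]
  have hkey : ∀ k, σ k * (S (f k)) x = |(S (f k)) x| := by
    intro k
    by_cases h : 0 ≤ (S (f k)) x
    · simp [hσdef, h, abs_of_nonneg h]
    · push_neg at h
      simp [hσdef, not_le.2 h, abs_of_neg h]
  set g : C(K, ℝ) := ∑ k ∈ F, σ k • f k with hgdef
  have hgnorm : ‖g‖ ≤ M := disjoint_sum_norm_le f M hM0 hM hdisj σ hσ F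
  have hval : (S g) x = ∑ k ∈ F, |(S (f k)) x| := by
    rw [hgdef, map_sum, ContinuousMap.sum_apply]
    refine Finset.sum_congr rfl fun k _ => ?_
    rw [map_smul]
    simp [hkey k]
  calc ∑ k ∈ F, |(S (f k)) x| = (S g) x := hval.symm
    _ ≤ |(S g) x| := le_abs_self _
    _ = ‖(S g) x‖ := (Real.norm_eq_abs _).symm
    _ ≤ ‖S g‖ := (S g).norm_coe_le_norm x
    _ ≤ ‖S‖ * ‖g‖ := S.le_opNorm g
    _ ≤ ‖S‖ * M := mul_le_mul_of_nonneg_left hgnorm (norm_nonneg S)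

/-- Tail smallness for a summable sequence of absolute values. -/
lemma tail_small (g : ℕ → ℝ) (hg : Summable fun k => |g k|) {ε : ℝ} (hε : 0 < ε) :
    ∃ N : ℕ, ∀ F : Finset ℕ, (∀ m ∈ F, N ≤ m) → ∑ m ∈ F, |g m| < ε := by
  obtain ⟨s, hs⟩ := hg.vanishing (Metric.ball_mem_nhds (0 : ℝ) hε)
  refine ⟨s.sup id + 1, fun F hF => ?_⟩
  have hdisj : Disjoint F s := by
    rw [Finset.disjoint_left]
    intro m hmF hms
    have h1 : s.sup id + 1 ≤ m := hF m hmF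
    have h2 : m ≤ s.sup id := Finset.le_sup (f := id) hms
    omega
  have := hs F hdisj
  rw [Metric.mem_ball, Real.dist_eq, sub_zero] at this
  exact lt_of_le_of_lt (le_abs_self _) this

lemma mapClusterPt_eq_limit' {X : Type*} [TopologicalSpace X] [T2Space X]
    {v : ℕ → X} {a b : X} (h : MapClusterPt a atTop v) (h' : Tendsto v atTop (nhds b)) :
    a = b := by
  have h1 : ClusterPt a (Filter.map v atTop) := h
  have h3 : NeBot (nhds a ⊓ Filter.map v atTop) := h1
  exact eq_of_nhds_neBot (h3.mono (inf_le_inf_left _ h'))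

lemma mem_of_mapClusterPt {X : Type*} [TopologicalSpace X] {v : ℕ → X} {a : X} {C : Set X}
    (hC : IsClosed C) (hv : ∀ᶠ k in atTop, v k ∈ C) (h : MapClusterPt a atTop v) :
    a ∈ C := by
  rw [← hC.closure_eq, mem_closure_iff_nhds]
  intro U hU
  obtain ⟨k, hk1, hk2⟩ := ((mapClusterPt_iff_frequently.mp h U hU).and_eventually hv).exists
  exact ⟨v k, hk1, hk2⟩

/-- Weak compactness gives continuity of pointwise sums. -/
lemma exists_continuous_tsum (S : C(K, ℝ) →L[ℝ] C(K, ℝ)) (hS : IsWeaklyCompactOp S)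
    (g : ℕ → C(K, ℝ)) (M : ℝ)
    (hbd : ∀ N : ℕ, ‖∑ j ∈ Finset.range N, g j‖ ≤ M)
    (hsum : ∀ x, Summable fun j => (S (g j)) x) :
    ∃ G : C(K, ℝ), ∀ x, G x = ∑' j, (S (g j)) x := by
  have hM0 : 0 ≤ M := le_trans (norm_nonneg _) (hbd 0)
  set c : ℝ := M + 1 with hc
  have hc0 : 0 < c := by linarith
  set u : ℕ → WeakSpace ℝ C(K, ℝ) :=
    fun N => toWeakSpace ℝ C(K, ℝ) (S (c⁻¹ • ∑ j ∈ Finset.range N, g j)) with hu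
  have humem : ∀ N, u N ∈ (toWeakSpace ℝ C(K, ℝ)) '' (S '' Metric.closedBall 0 1) := by
    intro N
    refine ⟨_, ⟨c⁻¹ • ∑ j ∈ Finset.range N, g j, ?_, rfl⟩, rfl⟩
    rw [Metric.mem_closedBall, dist_zero_right]
    refine le_trans (norm_smul_le c⁻¹ (∑ j ∈ Finset.range N, g j)) ?_
    rw [norm_inv, Real.norm_eq_abs, abs_of_pos hc0]
    calc c⁻¹ * ‖∑ j ∈ Finset.range N, g j‖ ≤ c⁻¹ * M :=
          mul_le_mul_of_nonneg_left (hbd N) (by positivity)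
      _ ≤ 1 := by rw [inv_mul_le_iff₀ hc0]; linarith
  haveI : NeBot (Filter.map u atTop) := Filter.map_neBot
  have hle : Filter.map u atTop ≤
      𝓟 (closure ((toWeakSpace ℝ C(K, ℝ)) '' (S '' Metric.closedBall 0 1))) := by
    rw [Filter.le_principal_iff, Filter.mem_map]
    exact Filter.Eventually.of_forall fun N => subset_closure (humem N)
  obtain ⟨w, hwB, hcl⟩ := hS.exists_clusterPt hle
  refine ⟨c • ((toWeakSpace ℝ C(K, ℝ)).symm w), fun x => ?_⟩
  have hev : Continuous fun z : WeakSpace ℝ C(K, ℝ) =>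
      ((topDualPairing ℝ C(K, ℝ)).flip) z (evalCLM' x) :=
    WeakBilin.eval_continuous _ _
  have hclw : MapClusterPt w atTop u := hcl
  have h1 := hclw.continuousAt_comp hev.continuousAt
  have hfun : (fun z : WeakSpace ℝ C(K, ℝ) => ((topDualPairing ℝ C(K, ℝ)).flip) z (evalCLM' x)) ∘ u
      = fun N => c⁻¹ * ∑ j ∈ Finset.range N, (S (g j)) x := by
    funext N
    show (S (c⁻¹ • ∑ j ∈ Finset.range N, g j)) x = _
    rw [map_smul, map_sum]
    simp [Finset.sum_apply]
  rw [hfun] at h1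
  have h2 : Tendsto (fun N => c⁻¹ * ∑ j ∈ Finset.range N, (S (g j)) x) atTop
      (nhds (c⁻¹ * ∑' j, (S (g j)) x)) :=
    ((hsum x).hasSum.tendsto_sum_nat).const_mul _
  have h3 : ((topDualPairing ℝ C(K, ℝ)).flip) w (evalCLM' x) = c⁻¹ * ∑' j, (S (g j)) x :=
    mapClusterPt_eq_limit' h1 h2
  have h4 : ((toWeakSpace ℝ C(K, ℝ)).symm w) x = c⁻¹ * ∑' j, (S (g j)) x := h3
  show c • ((toWeakSpace ℝ C(K, ℝ)).symm w) x = _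
  rw [h4, smul_eq_mul, ← mul_assoc, mul_inv_cancel₀ (ne_of_gt hc0), one_mul]

/-- The main lemma: a weakly compact operator sends bounded pairwise disjoint sequences to
sequences tending to zero along any sequence of points. -/
lemma weaklyCompactOp_tendsto (S : C(K, ℝ) →L[ℝ] C(K, ℝ)) (hS : IsWeaklyCompactOp S)
    (e : ℕ → C(K, ℝ)) (x : ℕ → K) (M : ℝ) (hM : ∀ n, ‖e n‖ ≤ M)
    (hdisj : ∀ i j, i ≠ j → e i * e j = 0) :
    Tendsto (fun n => (S (e n)) (x n)) atTop (nhds 0) := by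
  classical
  by_contra hcon
  have hM0 : 0 ≤ M := le_trans (norm_nonneg (e 0)) (hM 0)
  rw [Metric.tendsto_atTop] at hcon
  push_neg at hcon
  obtain ⟨ε, hε, hfr⟩ := hcon
  have hfr' : ∃ᶠ m in atTop, ε ≤ |(S (e m)) (x m)| := by
    rw [frequently_atTop]
    intro N; obtain ⟨m, hm, hm2⟩ := hfr N
    exact ⟨m, hm, by rwa [Real.dist_eq, sub_zero] at hm2⟩
  obtain ⟨φ, hφmono, hφ⟩ := Filter.extraction_of_frequently_atTop hfr'
  set σ : ℕ → ℝ := fun k => if 0 ≤ (S (e (φ k))) (x (φ k)) then 1 else -1 with hσdef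
  set f : ℕ → C(K, ℝ) := fun k => σ k • e (φ k) with hfdef
  set y : ℕ → K := fun k => x (φ k) with hydef
  set h : ℕ → C(K, ℝ) := fun k => S (f k) with hhdef
  have hσabs : ∀ k, |σ k| = 1 := by
    intro k; by_cases hc : 0 ≤ (S (e (φ k))) (x (φ k)) <;> simp [hσdef, hc]
  have hfM : ∀ k, ‖f k‖ ≤ M := by
    intro k
    have h1 : ‖σ k • e (φ k)‖ = ‖σ k‖ * ‖e (φ k)‖ := norm_smul (σ k) (e (φ k))
    rw [Real.norm_eq_abs, hσabs k, one_mul] at h1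
    show ‖σ k • e (φ k)‖ ≤ M
    rw [h1]
    exact hM (φ k)
  have hfdisj : ∀ i j, i ≠ j → f i * f j = 0 := by
    intro i j hij
    have h0 : e (φ i) * e (φ j) = 0 := hdisj _ _ fun hc => hij (hφmono.injective hc)
    ext z
    have h0z : e (φ i) z * e (φ j) z = 0 := by
      have := congrArg (fun u : C(K, ℝ) => u z) h0
      simpa using this
    show (σ i • e (φ i)) z * (σ j • e (φ j)) z = 0
    rw [ContinuousMap.smul_apply, ContinuousMap.smul_apply, smul_eq_mul, smul_eq_mul,
      mul_mul_mul_comm, h0z, mul_zero]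
  have hhy : ∀ k, ε ≤ (h k) (y k) := by
    intro k
    have hval : (h k) (y k) = σ k * (S (e (φ k))) (x (φ k)) := by
      rw [hhdef, hfdef]
      simp only []
      rw [map_smul]
      simp [hydef]
    rw [hval]
    by_cases hc : 0 ≤ (S (e (φ k))) (x (φ k))
    · have := hφ k; rw [abs_of_nonneg hc] at this; simpa [hσdef, hc] using this
    · push_neg at hc
      have := hφ k; rw [abs_of_neg hc] at this
      simp only [hσdef, not_le.2 hc, if_false]
      linarith
  have hL2 : ∀ (z : K) (F : Finset ℕ), ∑ k ∈ F, |(h k) z| ≤ ‖S‖ * M :=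
    fun z F => abs_sum_le S f M hM0 hfM hfdisj z F
  have habs : ∀ z, Summable fun k => |(h k) z| := fun z =>
    summable_of_sum_range_le (fun k => abs_nonneg _) fun m => hL2 z (Finset.range m)
  have hsummz : ∀ z, Summable fun k => (h k) z := fun z =>
    Summable.of_norm (by simpa [Real.norm_eq_abs] using habs z)
  -- cluster point of y
  haveI : NeBot (Filter.map y atTop) := Filter.map_neBot
  obtain ⟨xs, -, hxscl⟩ := isCompact_univ.exists_clusterPt
    (f := Filter.map y atTop) (by simp [Filter.le_principal_iff])
  have hxs : MapClusterPt xs atTop y := hxscl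
  obtain ⟨N₀, hN₀⟩ := tail_small (fun m => (h m) xs) (habs xs) (by positivity : (0:ℝ) < ε/8)
  -- the recursive construction
  set P : ℕ → Prop := fun a => N₀ ≤ a with hP
  set r : ℕ → ℕ → Prop := fun a b => a < b ∧ |(h a) (y b) - (h a) xs| < ε/32 * (1/2)^a ∧
      ∀ F : Finset ℕ, (∀ m ∈ F, b ≤ m) → ∑ m ∈ F, |(h m) (y a)| < ε/8 with hr
  have hstep : ∀ s : Finset ℕ, (∀ a ∈ s, P a) → ∃ b, P b ∧ ∀ a ∈ s, r a b := by
    intro s _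
    have hNa : ∀ a : ℕ, ∃ Na : ℕ, ∀ F : Finset ℕ, (∀ m ∈ F, Na ≤ m) →
        ∑ m ∈ F, |(h m) (y a)| < ε/8 :=
      fun a => tail_small (fun m => (h m) (y a)) (habs (y a)) (by positivity)
    choose Nf hNf using hNa
    set U : Set K := ⋂ a ∈ s, {z | |(h a) z - (h a) xs| < ε/32 * (1/2)^a} with hU
    have hUopen : IsOpen U := by
      refine isOpen_biInter_finset fun a _ => ?_
      exact isOpen_lt (((h a).continuous.sub continuous_const).abs) continuous_const
    have hxsU : xs ∈ U := by
      rw [hU]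
      simp only [Set.mem_iInter, Set.mem_setOf_eq]
      intro a _
      rw [sub_self, abs_zero]
      positivity
    have hfreq : ∃ᶠ m in atTop, y m ∈ U := mapClusterPt_iff_frequently.mp hxs U (hUopen.mem_nhds hxsU)
    obtain ⟨b, hbB, hbU⟩ := frequently_atTop.mp hfreq (max N₀ (max (s.sup Nf) (s.sup id + 1)))
    refine ⟨b, le_trans (le_max_left _ _) hbB, fun a ha => ⟨?_, ?_, ?_⟩⟩
    · have h1 : a ≤ s.sup id := Finset.le_sup (f := id) ha
      have h2 : s.sup id + 1 ≤ b :=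
        le_trans (le_trans (le_max_right _ _) (le_max_right _ _)) hbB
      omega
    · rw [hU] at hbU
      simp only [Set.mem_iInter, Set.mem_setOf_eq] at hbU
      exact hbU a ha
    · intro F hF
      refine hNf a F fun m hm => ?_
      have h1 : Nf a ≤ s.sup Nf := Finset.le_sup ha
      have h2 : s.sup Nf ≤ b := le_trans (le_trans (le_max_left _ _) (le_max_right _ _)) hbB
      have h3 : b ≤ m := hF m hm
      omega
  obtain ⟨n, hnP, hnr⟩ := exists_seq_of_forall_finset_exists P r hstep
  have hnmono : StrictMono n := fun a b hab => (hnr a b hab).1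
  have hninj : Function.Injective n := hnmono.injective
  -- continuity of the sum
  have hbdN : ∀ N : ℕ, ‖∑ j ∈ Finset.range N, f (n j)‖ ≤ M := by
    intro N
    have := disjoint_sum_norm_le (fun j => f (n j)) M hM0 (fun j => hfM (n j))
      (fun i j hij => hfdisj _ _ fun hc => hij (hninj hc)) (fun _ => 1)
      (by intro m; norm_num) (Finset.range N)
    simpa using this
  have habsn : ∀ z, Summable fun j => |(h (n j)) z| := fun z => (habs z).comp_injective hninj
  have hsumn : ∀ z, Summable fun j => (S (f (n j))) z := fun z =>
    (hsummz z).comp_injective hninj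
  obtain ⟨G, hG⟩ := exists_continuous_tsum S hS (fun j => f (n j)) M hbdN hsumn
  have hG' : ∀ z, G z = ∑' j, (h (n j)) z := hG
  -- bounds on sums over the subsequence at xs
  have hXS : ∀ F : Finset ℕ, ∑ j ∈ F, |(h (n j)) xs| ≤ ε/8 := by
    intro F
    have hmem : ∀ m ∈ F.image n, N₀ ≤ m := by
      intro m hm
      obtain ⟨j, -, rfl⟩ := Finset.mem_image.mp hm
      exact hnP j
    have h2 := hN₀ (F.image n) hmem
    rw [Finset.sum_image (fun a _ b _ hab => hninj hab)] at h2
    exact h2.le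
  have hgeopow : ∀ j, ((1:ℝ)/2)^(n j) ≤ ((1:ℝ)/2)^j := fun j =>
    pow_le_pow_of_le_one (by norm_num) (by norm_num) (hnmono.le_apply)
  have hgeosum : Summable fun j => ε/32 * ((1:ℝ)/2)^(n j) :=
    (summable_geometric_two.comp_injective hninj).mul_left _
  have hgeo : ∀ F : Finset ℕ, ∑ j ∈ F, ε/32 * ((1:ℝ)/2)^(n j) ≤ ε/16 := by
    intro F
    have h1 : ∑ j ∈ F, ε/32 * ((1:ℝ)/2)^(n j) ≤ ∑ j ∈ F, ε/32 * ((1:ℝ)/2)^j := by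
      refine Finset.sum_le_sum fun j _ => ?_
      exact mul_le_mul_of_nonneg_left (hgeopow j) (by positivity)
    have h2 : ∑ j ∈ F, ε/32 * ((1:ℝ)/2)^j ≤ ∑ j ∈ Finset.range (F.sup id + 1), ε/32 * ((1:ℝ)/2)^j := by
      refine Finset.sum_le_sum_of_subset_of_nonneg ?_ (fun j _ _ => by positivity)
      intro j hj
      rw [Finset.mem_range]
      have hle : j ≤ F.sup id := Finset.le_sup (f := id) hj
      omega
    have h3 : ∑ j ∈ Finset.range (F.sup id + 1), ε/32 * ((1:ℝ)/2)^j ≤ ε/32 * 2 := by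
      rw [← Finset.mul_sum]
      exact mul_le_mul_of_nonneg_left (sum_geometric_two_le _) (by positivity)
    linarith
  -- Claim A
  have claimA : ∀ k, 11*ε/16 ≤ G (y (n k)) := by
    intro k
    set z := y (n k) with hz
    have hsz : Summable fun j => (h (n j)) z := hsumn z
    have hsplit := Summable.sum_add_tsum_nat_add (k+1) hsz
    rw [hG' z, ← hsplit, Finset.sum_range_succ]
    have hA1 : |∑ j ∈ Finset.range k, (h (n j)) z| ≤ ε/8 + ε/16 := by
      refine le_trans (Finset.abs_sum_le_sum_abs _ _) ?_
      have hterm : ∀ j ∈ Finset.range k, |(h (n j)) z| ≤ |(h (n j)) xs| + ε/32 * ((1:ℝ)/2)^(n j) := by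
        intro j hj
        have hrjk := (hnr j k (Finset.mem_range.mp hj)).2.1
        have := abs_le_abs_add_abs_sub' ((h (n j)) z) ((h (n j)) xs)
        have h2 : (1:ℝ)/2 = 1/2 := rfl
        calc |(h (n j)) z| ≤ |(h (n j)) xs| + |(h (n j)) z - (h (n j)) xs| := this
          _ ≤ |(h (n j)) xs| + ε/32 * ((1:ℝ)/2)^(n j) := by
              have : |(h (n j)) z - (h (n j)) xs| < ε/32 * ((1:ℝ)/2)^(n j) := by
                simpa [hz] using hrjk
              linarith
      calc ∑ j ∈ Finset.range k, |(h (n j)) z|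
          ≤ ∑ j ∈ Finset.range k, (|(h (n j)) xs| + ε/32 * ((1:ℝ)/2)^(n j)) :=
            Finset.sum_le_sum hterm
        _ = ∑ j ∈ Finset.range k, |(h (n j)) xs| +
              ∑ j ∈ Finset.range k, ε/32 * ((1:ℝ)/2)^(n j) := Finset.sum_add_distrib
        _ ≤ ε/8 + ε/16 := add_le_add (hXS _) (hgeo _)
    have hA2 : |∑' j, (h (n (j + (k+1)))) z| ≤ ε/8 := by
      have hsumshift : Summable fun j => |(h (n (j + (k+1)))) z| :=
        (habsn z).comp_injective (add_left_injective (k+1))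
      have h1 : |∑' j, (h (n (j + (k+1)))) z| ≤ ∑' j, |(h (n (j + (k+1)))) z| := by
        have := norm_tsum_le_tsum_norm (f := fun j => (h (n (j + (k+1)))) z)
          (by simpa [Real.norm_eq_abs] using hsumshift)
        simpa [Real.norm_eq_abs] using this
      refine h1.trans (Summable.tsum_le_of_sum_le hsumshift ?_)
      intro F
      have hrk := (hnr k (k+1) (Nat.lt_succ_self k)).2.2
      have hmem : ∀ m ∈ F.image (fun j => n (j + (k+1))), n (k+1) ≤ m := by
        intro m hm
        obtain ⟨j, -, rfl⟩ := Finset.mem_image.mp hm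
        exact hnmono.le_iff_le.mpr (by omega)
      have himg := hrk (F.image (fun j => n (j + (k+1)))) hmem
      rw [Finset.sum_image (fun a _ b _ hab => by
        have := hninj hab; omega)] at himg
      exact himg.le
    have hA3 : ε ≤ (h (n k)) z := hhy (n k)
    have hb1 := abs_le.mp hA1
    have hb2 := abs_le.mp hA2
    linarith [hb1.1, hb2.1]
  -- second cluster point
  haveI : NeBot (Filter.map (fun k => y (n k)) atTop) := Filter.map_neBot
  obtain ⟨xss, -, hxsscl⟩ := isCompact_univ.exists_clusterPt
    (f := Filter.map (fun k => y (n k)) atTop) (by simp [Filter.le_principal_iff])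
  have hxss : MapClusterPt xss atTop fun k => y (n k) := hxsscl
  have hGxss_ge : 11*ε/16 ≤ G xss := by
    have hcomp := hxss.continuousAt_comp G.continuous.continuousAt
    have := mem_of_mapClusterPt (C := Set.Ici (11*ε/16)) isClosed_Ici
      (Filter.Eventually.of_forall fun k => claimA k) hcomp
    exact this
  have hCj : ∀ j, |(h (n j)) xss - (h (n j)) xs| ≤ ε/32 * ((1:ℝ)/2)^(n j) := by
    intro j
    refine mem_of_mapClusterPt
      (C := {z | |(h (n j)) z - (h (n j)) xs| ≤ ε/32 * ((1:ℝ)/2)^(n j)}) ?_ ?_ hxss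
    · exact isClosed_le (((h (n j)).continuous.sub continuous_const).abs) continuous_const
    · refine eventually_atTop.mpr ⟨j+1, fun k hk => ?_⟩
      exact ((hnr j k (by omega)).2.1).le
  have hupper : |G xss| ≤ ε/8 + ε/16 := by
    rw [hG' xss]
    have hs1 : Summable fun j => |(h (n j)) xss| := habsn xss
    have h1 : |∑' j, (h (n j)) xss| ≤ ∑' j, |(h (n j)) xss| := by
      have := norm_tsum_le_tsum_norm (f := fun j => (h (n j)) xss)
        (by simpa [Real.norm_eq_abs] using hs1)
      simpa [Real.norm_eq_abs] using this
    refine h1.trans ?_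
    have h2 : ∀ j, |(h (n j)) xss| ≤ |(h (n j)) xs| + ε/32 * ((1:ℝ)/2)^(n j) := by
      intro j
      have := abs_le_abs_add_abs_sub' ((h (n j)) xss) ((h (n j)) xs)
      have h3 := hCj j
      linarith
    have hs2 : Summable fun j => |(h (n j)) xs| + ε/32 * ((1:ℝ)/2)^(n j) :=
      (habsn xs).add hgeosum
    refine (Summable.tsum_le_tsum h2 hs1 hs2).trans ?_
    rw [Summable.tsum_add (habsn xs) hgeosum]
    have t1 : ∑' j, |(h (n j)) xs| ≤ ε/8 := Summable.tsum_le_of_sum_le (habsn xs) hXS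
    have t2 : ∑' j, ε/32 * ((1:ℝ)/2)^(n j) ≤ ε/16 :=
      Summable.tsum_le_of_sum_le hgeosum hgeo
    linarith
  have hfinal : G xss ≤ ε/8 + ε/16 := le_trans (le_abs_self _) hupper
  linarith

end Aux

/-- Every weak multiplication on `C(K, ℝ)` is a weak multiplier. -/
theorem isWeakMultiplier_of_isWeakMultiplication
    {K : Type*} [TopologicalSpace K] [CompactSpace K] [T2Space K]
    (T : C(K, ℝ) →L[ℝ] C(K, ℝ)) (hT : IsWeakMultiplication T) :
    IsWeakMultiplier T := by
  obtain ⟨g, S, hS, rfl⟩ := hT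
  intro e x hMex hdisj hzero
  obtain ⟨M, hM⟩ := hMex
  have hmain := weaklyCompactOp_tendsto S hS e x M hM hdisj
  refine hmain.congr fun m => ?_
  show (S (e m)) (x m) = ((ContinuousLinearMap.mul ℝ C(K, ℝ) g + S) (e m)) (x m)
  rw [ContinuousLinearMap.add_apply, ContinuousMap.add_apply, ContinuousLinearMap.mul_apply',
    ContinuousMap.mul_apply, hzero m, mul_zero, zero_add]
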